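/- Let K be a field of characteristic p > 0 equipped with a normalized discrete valuation v (a surjective group homomorphism v : K^× → ℤ satisfying v(x+y) ≥ min(v(x), v(y)) whenever x, y, x+y are nonzero). Let λ ∈ K^× with v(λ) = 1 and set α = λ^{1−p}·(1 + λ + λ^2 + ⋯ + λ^{p−2}). Then the polynomial X^p − X − α is irreducible over K, the quotient L = K[X]/(X^p − X − α) is a field extension of K of degree p, and λ lies in the image of the norm map N_{L/K} : L^× → K^×. -/

import Mathlib

open Polynomial



/-- Degree of `X ^ p + r` when `degree r ≤ 1 < p`. -/
lemma AS_natDegree' {K : Type*} [Field K] {p : ℕ} (hp : 2 ≤ p) (r : K[X])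
    (hr : r.degree ≤ 1) : (X ^ p + r).natDegree = p ∧ (X ^ p + r : K[X]).Monic := by
  have hd : r.degree < (X ^ p : K[X]).degree := by
    rw [degree_X_pow]
    exact lt_of_le_of_lt hr (by exact_mod_cast Nat.lt_of_lt_of_le one_lt_two hp)
  have hdeg : (X ^ p + r).degree = (p : WithBot ℕ) := by
    rw [degree_add_eq_left_of_degree_lt hd, degree_X_pow]
  exact ⟨natDegree_eq_of_degree_eq_some hdeg, (monic_X_pow p).add_of_left hd⟩

/-- In a field of characteristic `p`, any solution of `x ^ p = x` lies in the image
of `ZMod p`. -/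
lemma pow_char_eq_self_mem' {p : ℕ} [Fact p.Prime] {E : Type*} [Field E] [CharP E p]
    {x : E} (hx : x ^ p = x) : ∃ i : ZMod p, (ZMod.castHom (dvd_refl p) E) i = x := by
  classical
  have hp2 : 2 ≤ p := (Fact.out : p.Prime).two_le
  set Q : E[X] := X ^ p + (-X) with hQ
  obtain ⟨hQdeg, hQmon⟩ := AS_natDegree' (K := E) hp2 (-X) (by rw [degree_neg, degree_X])
  have hQne : Q ≠ 0 := hQmon.ne_zero
  set φ : ZMod p →+* E := ZMod.castHom (dvd_refl p) E with hφ
  have hroot : ∀ y : E, y ^ p = y → y ∈ Q.roots.toFinset := by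
    intro y hy
    rw [Multiset.mem_toFinset, mem_roots hQne]
    simp [hQ, IsRoot, hy]
  set T : Finset E := Finset.univ.image φ with hT
  have hTsub : T ⊆ Q.roots.toFinset := by
    intro y hy
    rw [hT, Finset.mem_image] at hy
    obtain ⟨i, -, rfl⟩ := hy
    refine hroot _ ?_
    rw [← map_pow, ZMod.pow_card]
  have hTcard : T.card = p := by
    rw [hT, Finset.card_image_of_injective _ (ZMod.castHom_injective E),
      Finset.card_univ, ZMod.card]
  have hle : Q.roots.toFinset.card ≤ p := by
    calc Q.roots.toFinset.card ≤ Multiset.card Q.roots := Q.roots.toFinset_card_le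
    _ ≤ Q.natDegree := Q.card_roots' 
    _ = p := hQdeg
  have hTeq : T = Q.roots.toFinset :=
    Finset.eq_of_subset_of_card_le hTsub (by rw [hTcard]; exact hle)
  have hxmem : x ∈ T := by rw [hTeq]; exact hroot x hx
  rw [hT, Finset.mem_image] at hxmem
  obtain ⟨i, -, hi⟩ := hxmem
  exact ⟨i, hi⟩

/-- Artin–Schreier irreducibility. -/
lemma AS_irreducible (p : ℕ) (hp : p.Prime) (K : Type*) [Field K] [CharP K p] (a : K)
    (h : ∀ c : K, c ^ p - c ≠ a) : Irreducible (X ^ p - X - C a : K[X]) := by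
  classical
  haveI : Fact p.Prime := ⟨hp⟩
  have hp2 : 2 ≤ p := hp.two_le
  have hre : (X ^ p - X - C a : K[X]) = X ^ p + (-X - C a) := by ring
  obtain ⟨hdeg, hmon⟩ := AS_natDegree' (K := K) hp2 (-X - C a) (by
    refine le_trans (degree_sub_le _ _) ?_
    simp [degree_neg, degree_X, degree_C_le]
    exact degree_C_le.trans (by norm_num))
  rw [hre]
  set f : K[X] := X ^ p + (-X - C a) with hf
  set E := AlgebraicClosure K
  haveI : CharP E p := charP_of_injective_algebraMap (algebraMap K E).injective p
  set φ : K →+* E := algebraMap K E with hφ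
  -- a root of f in E
  obtain ⟨θ, hθ⟩ : ∃ θ : E, (f.map φ).eval θ = 0 := by
    have hdne : (f.map φ).degree ≠ 0 := by
      rw [degree_map, degree_eq_natDegree hmon.ne_zero, hdeg]
      simp only [ne_eq, Nat.cast_eq_zero]
      exact_mod_cast by omega
    exact IsAlgClosed.exists_root _ hdne
  have hθroot : θ ^ p - θ - φ a = 0 := by
    have := hθ
    simp [hf, eval_map] at this ⊢
    linear_combination this
  rw [hmon.irreducible_iff_natDegree]
  refine ⟨fun h1 => by simp [h1] at hdeg; omega, fun g q hg hq hgq => ?_⟩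
  by_contra hcon
  push_neg at hcon
  obtain ⟨hg0, hq0⟩ := hcon
  have hdadd : g.natDegree + q.natDegree = p := by
    rw [← hdeg, ← hgq, hg.natDegree_mul hq]
  set d := g.natDegree with hd
  have hdlt : d < p := by omega
  have hdpos : 0 < d := Nat.pos_of_ne_zero hg0
  -- roots of g over E
  have hgmapmon : (g.map φ).Monic := hg.map φ
  have hsplits : Splits (g.map φ) := IsAlgClosed.splits _
  have hcard : Multiset.card (g.map φ).roots = d := by
    rw [splits_iff_card_roots.mp hsplits, natDegree_map]
  have hdvd : g.map φ ∣ f.map φ := Polynomial.map_dvd φ ⟨q, hgq.symm⟩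
  have hroots : ∀ r ∈ (g.map φ).roots, ∃ i : ZMod p, r - θ = ZMod.castHom (dvd_refl p) E i := by
    intro r hr
    have hrf : (f.map φ).eval r = 0 := by
      have hrg : (g.map φ).eval r = 0 := (mem_roots hgmapmon.ne_zero).mp hr |>.eq_zero -- ?
      obtain ⟨w, hw⟩ := hdvd
      rw [hw, eval_mul, hrg, zero_mul]
    have hrroot : r ^ p - r - φ a = 0 := by
      simp [hf, eval_map] at hrf
      linear_combination hrf
    have key : (r - θ) ^ p = r - θ := by
      rw [sub_pow_char (p := p) (x := r) (y := θ)]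
      linear_combination hrroot - hθroot
    obtain ⟨i, hi⟩ := pow_char_eq_self_mem' key
    exact ⟨i, hi.symm⟩
  -- sum of roots
  have hsum : (g.map φ).roots.sum = - φ g.nextCoeff := by
    have h2 := hsplits.nextCoeff_eq_neg_sum_roots_of_monic hgmapmon
    rw [nextCoeff_map φ.injective] at h2
    exact neg_eq_iff_eq_neg.mp h2.symm
  set ψ : ZMod p →+* E := ZMod.castHom (dvd_refl p) E with hψdef
  have hmem : ((g.map φ).roots.map (fun r => r - θ)).sum ∈ ψ.range := by
    refine Subring.multiset_sum_mem _ _ ?_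
    intro x hx
    rw [Multiset.mem_map] at hx
    obtain ⟨r, hr, rfl⟩ := hx
    obtain ⟨i, hi⟩ := hroots r hr
    exact ⟨i, hi.symm⟩
  obtain ⟨i, hi⟩ := hmem
  have hsum2 : ((g.map φ).roots.map (fun r => r - θ)).sum
      = (g.map φ).roots.sum - (d : E) * θ := by
    rw [Multiset.sum_map_sub]
    simp only [Multiset.map_id', Multiset.map_const', Multiset.sum_replicate, hcard]
    rw [nsmul_eq_mul]
  have hψ : ψ = φ.comp (ZMod.castHom (dvd_refl p) K) := Subsingleton.elim _ _
  have hdK : (d : K) ≠ 0 := by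
    rw [Ne, CharP.cast_eq_zero_iff K p]
    exact Nat.not_dvd_of_pos_of_lt hdpos hdlt
  set c : K := (d : K)⁻¹ * (-(g.nextCoeff) - ZMod.castHom (dvd_refl p) K i) with hc
  have hθK : θ = φ c := by
    have hi' : ψ i = φ (ZMod.castHom (dvd_refl p) K i) := by rw [hψ]; rfl
    have hdEne : φ ((d : K)) ≠ 0 := fun hzero => hdK (φ.injective (by rwa [map_zero]))
    have lhs : φ ((d:K)) * θ = φ (-(g.nextCoeff) - ZMod.castHom (dvd_refl p) K i) := by
      have hdE : φ ((d : K)) = (d : E) := by push_cast; rfl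
      rw [hdE, map_sub, map_neg, ← hi']
      linear_combination hsum + hsum2 + hi
    rw [hc, map_mul, map_inv₀, eq_inv_mul_iff_mul_eq₀ hdEne]
    exact lhs
  have hfin : φ (c ^ p - c - a) = 0 := by
    rw [map_sub, map_sub, map_pow, ← hθK]
    exact hθroot
  have : c ^ p - c - a = 0 := φ.injective (by rwa [map_zero])
  exact h c (by linear_combination this)

/-- Let `K` be a field of characteristic `p > 0` equipped with a normalized discrete
valuation `v`.  Let `λ ∈ Kˣ` with `v λ = 1` and set
`α = λ ^ (1 - p) * (1 + λ + λ ^ 2 + ⋯ + λ ^ (p - 2))`.  Then the Artin–Schreier polynomial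
`X ^ p - X - α` is irreducible over `K`, the quotient `L = K[X]/(X ^ p - X - α)` is a field
extension of `K` of degree `p`, and `λ` lies in the image of the norm map
`N_{L/K} : Lˣ → Kˣ`. -/
theorem artinSchreier_extension_with_uniformizer_norm
    (p : ℕ) (hp : p.Prime) (K : Type) [Field K] [CharP K p]
    (v : Kˣ → ℤ)
    (hv_mul : ∀ x y : Kˣ, v (x * y) = v x + v y)
    (hv_surj : Function.Surjective v)
    (hv_ultra : ∀ x y z : Kˣ, (x : K) + (y : K) = (z : K) → min (v x) (v y) ≤ v z)
    (l : Kˣ) (hl : v l = 1)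
    (α : K)
    (hα : α = ((l ^ ((1 : ℤ) - (p : ℤ)) : Kˣ) : K) *
      ∑ i ∈ Finset.range (p - 1), (l : K) ^ i) :
    Irreducible (X ^ p - X - C α : K[X]) ∧
      IsField (AdjoinRoot (X ^ p - X - C α : K[X])) ∧
      Module.finrank K (AdjoinRoot (X ^ p - X - C α : K[X])) = p ∧
      ∃ x : (AdjoinRoot (X ^ p - X - C α : K[X]))ˣ,
        Algebra.norm K ((x : AdjoinRoot (X ^ p - X - C α : K[X]))) = (l : K) := by
  classical
  haveI : Fact p.Prime := ⟨hp⟩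
  have hp2 : 2 ≤ p := hp.two_le
  -- basic valuation facts
  have hv1 : v 1 = 0 := by have := hv_mul 1 1; simp at this; omega
  have hvneg1 : v (-1) = 0 := by have := hv_mul (-1) (-1); simp [hv1] at this; omega
  have hvinv : ∀ x : Kˣ, v x⁻¹ = - v x := by
    intro x; have := hv_mul x x⁻¹; simp [hv1] at this; omega
  have hvpow : ∀ (x : Kˣ) (n : ℕ), v (x ^ n) = n * v x := by
    intro x n
    induction n with
    | zero => simpa using hv1
    | succ n ih => rw [pow_succ, hv_mul, ih]; push_cast; ring
  have hvzpow : ∀ (x : Kˣ) (n : ℤ), v (x ^ n) = n * v x := by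
    intro x n
    obtain ⟨m, rfl | rfl⟩ := n.eq_nat_or_neg
    · rw [zpow_natCast, hvpow]
    · rw [zpow_neg, hvinv, zpow_natCast, hvpow]; ring
  have hvneg : ∀ x : Kˣ, v (-x) = v x := by
    intro x
    have := hv_mul (-1) x
    simp only [neg_one_mul] at this
    rw [this, hvneg1, zero_add]
  have hmin : ∀ x y z : Kˣ, (x : K) + (y : K) = (z : K) → v x < v y → v z = v x := by
    intro x y z hxyz hlt
    have h1 := hv_ultra x y z hxyz
    have h2 : min (v z) (v (-y)) ≤ v x := by
      refine hv_ultra z (-y) x ?_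
      rw [Units.val_neg, ← hxyz]; ring
    rw [hvneg] at h2
    omega
  -- the geometric sum
  set s : K := ∑ i ∈ Finset.range (p - 1), (l : K) ^ i with hs
  have hgeom : s * ((l : K) - 1) = (l : K) ^ (p - 1) - 1 := geom_sum_mul _ _
  have hne1 : ((l : K) - 1) ≠ 0 := by
    intro h0
    have : l = 1 := Units.ext (by simpa [sub_eq_zero] using h0)
    rw [this, hv1] at hl; exact one_ne_zero hl.symm
  have hnep : ((l : K) ^ (p - 1) - 1) ≠ 0 := by
    intro h0
    have : l ^ (p - 1) = 1 := Units.ext (by push_cast; simpa [sub_eq_zero] using h0)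
    have h2 := hvpow l (p - 1)
    rw [this, hv1, hl] at h2
    omega
  -- units
  set u1 : Kˣ := Units.mk0 _ hne1 with hu1
  set u2 : Kˣ := Units.mk0 _ hnep with hu2
  have hvu1 : v u1 = 0 := by
    have := hmin (-1) l u1
      (by simp only [hu1, Units.val_mk0, Units.val_neg, Units.val_one]; ring)
      (by rw [hvneg1, hl]; norm_num)
    rwa [hvneg1] at this
  have hvu2 : v u2 = 0 := by
    have := hmin (-1) (l ^ (p - 1)) u2
      (by simp only [hu2, Units.val_mk0, Units.val_neg, Units.val_one,
            Units.val_pow_eq_pow_val]; ring)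
      (by rw [hvneg1, hvpow, hl]; push_cast; omega)
    rwa [hvneg1] at this
  set us : Kˣ := u2 * u1⁻¹ with hus
  have husv : (us : K) = s := by
    rw [hus, Units.val_mul, hu2, hu1, Units.val_inv_eq_inv_val, Units.val_mk0,
      Units.val_mk0, mul_inv_eq_iff_eq_mul₀ hne1]
    exact hgeom.symm
  have hvus : v us = 0 := by rw [hus, hv_mul, hvinv, hvu1, hvu2]; ring
  set uα : Kˣ := l ^ ((1 : ℤ) - (p : ℤ)) * us with huα
  have huαv : (uα : K) = α := by
    rw [huα, hα, Units.val_mul, husv]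
  have hvuα : v uα = 1 - p := by
    rw [huα, hv_mul, hvzpow, hvus, hl]; ring
  -- α is not of the form c ^ p - c
  have hnoroot : ∀ c : K, c ^ p - c ≠ α := by
    intro c hc
    have hα0 : α ≠ 0 := by rw [← huαv]; exact uα.ne_zero
    have hc0 : c ≠ 0 := by
      rintro rfl; rw [zero_pow hp.ne_zero, sub_zero] at hc; exact hα0 hc.symm
    set uc : Kˣ := Units.mk0 c hc0 with huc
    have heq : ((uc ^ p : Kˣ) : K) + ((-uc : Kˣ) : K) = (uα : K) := by
      rw [Units.val_neg, huαv, huc, Units.val_pow_eq_pow_val, Units.val_mk0]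
      linear_combination hc
    rcases lt_or_ge (v uc) 0 with hvc | hvc
    · have hlt : v (uc ^ p) < v (-uc) := by
        rw [hvneg, hvpow]
        nlinarith [hp2]
      have := hmin _ _ _ heq hlt
      rw [hvuα, hvpow] at this
      have hdvd : (p : ℤ) ∣ 1 := ⟨v uc + 1, by linarith⟩
      have := Int.le_of_dvd one_pos hdvd
      omega
    · have := hv_ultra _ _ _ heq
      rw [hvuα, hvpow, hvneg] at this
      have hpos : 0 ≤ (p : ℤ) * v uc := by positivity
      omega
  -- irreducibility
  have hirr : Irreducible (X ^ p - X - C α : K[X]) :=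
    AS_irreducible p hp K α hnoroot
  set f : K[X] := X ^ p - X - C α with hf
  have hre : f = X ^ p + (-X - C α) := by rw [hf]; ring
  obtain ⟨hdeg0, hmon0⟩ := AS_natDegree' (K := K) hp2 (-X - C α) (by
    refine le_trans (degree_sub_le _ _) ?_
    simp [degree_neg, degree_X, degree_C_le]
    exact degree_C_le.trans (by norm_num))
  have hmon : f.Monic := by rw [hre]; exact hmon0
  have hdegf : f.natDegree = p := by rw [hre]; exact hdeg0
  have hfne : f ≠ 0 := hmon.ne_zero
  haveI hfact : Fact (Irreducible f) := ⟨hirr⟩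
  have hLfield : IsField (AdjoinRoot f) := Field.toIsField _
  set pb := AdjoinRoot.powerBasis hfne with hpb
  have hpbdim : pb.dim = p := by rw [hpb, AdjoinRoot.powerBasis_dim, hdegf]
  have hpbgen : pb.gen = AdjoinRoot.root f := by rw [hpb, AdjoinRoot.powerBasis_gen]
  have hfinrank : Module.finrank K (AdjoinRoot f) = p := by rw [pb.finrank, hpbdim]
  haveI : Module.Finite K (AdjoinRoot f) := pb.finite
  refine ⟨hirr, hLfield, hfinrank, ?_⟩
  -- notation
  set θ : AdjoinRoot f := AdjoinRoot.root f with hθdef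
  set A : AdjoinRoot f := algebraMap K (AdjoinRoot f) α with hA
  set cc : AdjoinRoot f := algebraMap K (AdjoinRoot f) ((l : K)) with hcc
  have hinj : Function.Injective (algebraMap K (AdjoinRoot f)) :=
    (algebraMap K (AdjoinRoot f)).injective
  haveI : CharP (AdjoinRoot f) p := charP_of_injective_algebraMap hinj p
  have h0 : Polynomial.aeval θ f = 0 := by
    rw [hθdef, aeval_def, AdjoinRoot.algebraMap_eq]
    exact AdjoinRoot.eval₂_root f
  have hθeq : θ ^ p = θ + A := by
    have h0' : Polynomial.aeval θ (X ^ p - X - C α) = 0 := by rw [← hf]; exact h0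
    simp only [map_sub, map_pow, aeval_X, aeval_C, ← hA] at h0'
    linear_combination h0'
  -- θ is not in K
  have hθnotK : ∀ k : K, θ ≠ algebraMap K (AdjoinRoot f) k := by
    intro k hk
    have : Polynomial.aeval (algebraMap K (AdjoinRoot f) k) f = 0 := by rw [← hk]; exact h0
    rw [aeval_algebraMap_apply] at this
    have h2 : (Polynomial.aeval k f) = 0 := hinj (by rwa [map_zero])
    have h2' : Polynomial.aeval k (X ^ p - X - C α) = 0 := by rw [← hf]; exact h2
    simp only [map_sub, map_pow, aeval_X, aeval_C, Algebra.algebraMap_self_apply] at h2'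
    exact hnoroot k (by linear_combination h2')
  -- minpoly of θ is f ; norm of θ
  have hminθ : minpoly K θ = f := by
    have := AdjoinRoot.minpoly_powerBasis_gen_of_monic hmon
    rwa [AdjoinRoot.powerBasis_gen, ← hθdef] at this
  have hcoeff0 : f.coeff 0 = -α := by
    rw [hf]
    simp [coeff_X_pow, hp.pos.ne]
  have hnegone : (-1 : K) ^ p = -1 := neg_one_pow_char K p
  have hNθ : Algebra.norm K θ = α := by
    have hn := Algebra.PowerBasis.norm_gen_eq_coeff_zero_minpoly pb
    rw [hpbgen] at hn
    rw [hn, hminθ, hcoeff0, hpbdim, hnegone]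
    ring
  -- the element θ' = l·θ + 1 and its minimal polynomial
  set θ' : AdjoinRoot f := cc * θ + 1 with hθ'
  set c1 : K := (l : K) ^ (p - 1) with hc1
  set g : K[X] := X ^ p + (C (-c1) * X + C (c1 - 1 - (l : K) ^ p * α)) with hg
  obtain ⟨hgdeg, hgmon⟩ := AS_natDegree' (K := K) hp2 (C (-c1) * X + C (c1 - 1 - (l : K) ^ p * α))
    degree_linear_le
  have haevalg : Polynomial.aeval θ' g = 0 := by
    have e1 : algebraMap K (AdjoinRoot f) c1 = cc ^ (p - 1) := by rw [hc1, hcc, map_pow]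
    have e2 : algebraMap K (AdjoinRoot f) ((l : K) ^ p * α) = cc ^ p * A := by
      rw [map_mul, hcc, map_pow, hA]
    have e3 : cc ^ (p - 1) * cc = cc ^ p := by rw [← pow_succ]; congr 1; omega
    rw [hg]
    simp only [map_add, map_pow, map_mul, aeval_X, aeval_C, map_neg, map_sub, map_one, e1, e2]
    rw [hθ', add_pow_char, mul_pow, one_pow, hθeq]
    linear_combination (-θ) * e3
  -- θ' generates the extension
  have hl0 : (l : K) ≠ 0 := Units.ne_zero l
  have hccne : cc ≠ 0 := by
    rw [hcc]; intro h0; exact hl0 (hinj (by rwa [map_zero]))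
  have hint : IsIntegral K θ' := IsIntegral.of_finite K θ'
  have hgenmem : pb.gen ∈ Algebra.adjoin K ({θ'} : Set (AdjoinRoot f)) := by
    have hmem : θ' ∈ Algebra.adjoin K ({θ'} : Set (AdjoinRoot f)) :=
      Algebra.subset_adjoin rfl
    have hθexpr : θ = algebraMap K (AdjoinRoot f) ((l : K)⁻¹) * (θ' - 1) := by
      rw [hθ', add_sub_cancel_right, hcc, ← mul_assoc, ← map_mul,
        inv_mul_cancel₀ hl0, map_one, one_mul]
    rw [hpbgen, hθexpr]
    exact Subalgebra.mul_mem _ (Subalgebra.algebraMap_mem _ _)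
      (Subalgebra.sub_mem _ hmem (Subalgebra.one_mem _))
  set pb' := PowerBasis.ofAdjoinEqTop' hint (PowerBasis.adjoin_eq_top_of_gen_mem_adjoin hgenmem) with hpb'
  have hpb'gen : pb'.gen = θ' := by rw [hpb', PowerBasis.ofAdjoinEqTop'_gen]
  have hpb'dim : pb'.dim = p := by rw [← pb'.finrank]; exact hfinrank
  have hminθ' : minpoly K θ' = g := by
    have hdvd : minpoly K θ' ∣ g := minpoly.dvd K θ' haevalg
    have hdeg' : (minpoly K θ').natDegree = p := by
      have hnd := pb'.natDegree_minpoly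
      rwa [hpb'gen, hpb'dim] at hnd
    exact eq_of_dvd_of_natDegree_le_of_leadingCoeff hdvd
      (by rw [hgdeg, hdeg'])
      (by rw [(minpoly.monic hint).leadingCoeff, hgmon.leadingCoeff])
  -- power computations
  have hls : (l : K) ^ (p - 1) * α = s := by
    rw [hα, Units.val_zpow_eq_zpow_val, ← mul_assoc, ← zpow_natCast ((l : K)) (p - 1),
      ← zpow_add₀ hl0]
    rw [show ((p - 1 : ℕ) : ℤ) + (1 - (p : ℤ)) = 0 by omega, zpow_zero, one_mul]
  have hlp : (l : K) ^ p * α = (l : K) * s := by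
    rw [show (l : K) ^ p = (l : K) * (l : K) ^ (p - 1) by
      rw [← pow_succ']; congr 1; omega, mul_assoc, hls]
  -- norm of θ'
  have hNθ' : Algebra.norm K θ' = s := by
    have hn := Algebra.PowerBasis.norm_gen_eq_coeff_zero_minpoly pb'
    rw [hpb'gen] at hn
    rw [hn, hminθ', hpb'dim, hnegone, hg]
    have hgc : (X ^ p + (C (-c1) * X + C (c1 - 1 - (l : K) ^ p * α)) : K[X]).coeff 0
        = c1 - 1 - (l : K) ^ p * α := by
      simp only [coeff_add, coeff_X_pow, coeff_C_mul, coeff_X_zero, mul_zero, coeff_C_zero,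
        if_neg hp.pos.ne, zero_add]
    rw [hgc, hlp]
    linear_combination hgeom
  -- norm of cc * θ
  have hNccθ : Algebra.norm K (cc * θ) = (l : K) * s := by
    rw [map_mul, hNθ, hcc, Algebra.norm_algebraMap, hfinrank, hlp]
  -- nonvanishing
  have hsne : s ≠ 0 := by rw [← husv]; exact us.ne_zero
  have hθne : θ ≠ 0 := by
    intro h0; exact hθnotK 0 (by rw [map_zero]; exact h0)
  have hccθne : cc * θ ≠ 0 := mul_ne_zero hccne hθne
  have hθ'ne : θ' ≠ 0 := by
    intro h0
    have h3 : cc * θ = cc * (-(cc⁻¹)) := by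
      rw [mul_neg, mul_inv_cancel₀ hccne]
      have : cc * θ + 1 = 0 := by rw [← hθ']; exact h0
      linear_combination this
    have h4 : θ = -(cc⁻¹) := mul_left_cancel₀ hccne h3
    exact hθnotK (-(l : K)⁻¹) (by rw [map_neg, map_inv₀, ← hcc, ← h4])
  -- the norm-one unit
  refine ⟨Units.mk0 (cc * θ) hccθne * (Units.mk0 θ' hθ'ne)⁻¹, ?_⟩
  have hval : ((Units.mk0 (cc * θ) hccθne * (Units.mk0 θ' hθ'ne)⁻¹ :
      (AdjoinRoot f)ˣ) : AdjoinRoot f) * θ' = cc * θ := by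
    rw [Units.val_mul, Units.val_inv_eq_inv_val, Units.val_mk0, Units.val_mk0,
      mul_assoc, inv_mul_cancel₀ hθ'ne, mul_one]
  have hNmul : Algebra.norm K (((Units.mk0 (cc * θ) hccθne * (Units.mk0 θ' hθ'ne)⁻¹ :
      (AdjoinRoot f)ˣ) : AdjoinRoot f)) * s = (l : K) * s := by
    have hmm := map_mul (Algebra.norm K)
      ((Units.mk0 (cc * θ) hccθne * (Units.mk0 θ' hθ'ne)⁻¹ : (AdjoinRoot f)ˣ) : AdjoinRoot f) θ'
    rw [hval, hNccθ, hNθ'] at hmm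
    exact hmm.symm
  exact mul_right_cancel₀ hsne hNmul
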